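/- Let M be a finite Moufang loop and let x ∈ M with x ≠ 1 be such that x is adjacent in the undirected power graph of M to every other vertex. Let p be a prime dividing the order of some element of M (equivalently, a prime divisor of the exponent of M). Then every element of M of order p is a power of x, and M has exactly one subloop of order p, which is contained in the set of powers of x. -/

import Mathlib

namespace PowerGraphPaper

variable {M : Type*}

/-- Iterated power with respect to a binary operation `mul` and identity `one`:
`x ^ 0 = 1` and `x ^ (k+1) = x * x ^ k`. -/
def opow (mul : M → M → M) (one : M) (x : M) : ℕ → M
  | 0 => one
  | k + 1 => mul x (opow mul one x k)

/-- The order of an element: the least `k > 0` with `x ^ k = 1` (and `0` if there is none). -/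
noncomputable def oorder (mul : M → M → M) (one : M) (x : M) : ℕ :=
  sInf {k : ℕ | 0 < k ∧ opow mul one x k = one}

/-- The inverse of an element of a finite power-associative loop: `x ^ (|x| - 1)`. -/
noncomputable def oinv (mul : M → M → M) (one : M) (x : M) : M :=
  opow mul one x (oorder mul one x - 1)

/-- A subloop: a subset containing the identity and closed under multiplication and inverses. -/
def IsSubloop (mul : M → M → M) (one : M) (S : Set M) : Prop :=
  one ∈ S ∧ (∀ x ∈ S, ∀ y ∈ S, mul x y ∈ S) ∧ ∀ x ∈ S, oinv mul one x ∈ S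

/-- The multiplication is associative on the subset `S`. -/
def IsAssocOn (mul : M → M → M) (S : Set M) : Prop :=
  ∀ x ∈ S, ∀ y ∈ S, ∀ z ∈ S, mul (mul x y) z = mul x (mul y z)

/-- The multiplication is commutative on the subset `S`. -/
def IsCommOn (mul : M → M → M) (S : Set M) : Prop :=
  ∀ x ∈ S, ∀ y ∈ S, mul x y = mul y x

/-- A subset is cyclic if it is the set of powers of one of its elements. -/
def IsCyclicSubloop (mul : M → M → M) (one : M) (S : Set M) : Prop :=
  ∃ g ∈ S, S = {y | ∃ k : ℕ, opow mul one g k = y}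

/-- A loop structure on a type `M`: a binary operation all of whose left and right
translations are bijections, together with a two-sided identity. -/
structure LoopStr (M : Type*) where
  mul : M → M → M
  one : M
  mulLeft_bijective : ∀ a, Function.Bijective (mul a)
  mulRight_bijective : ∀ a, Function.Bijective (fun x => mul x a)
  one_mul : ∀ x, mul one x = x
  mul_one : ∀ x, mul x one = x

namespace LoopStr

/-- The Moufang identity `z(x(zy)) = ((zx)z)y`. -/
def IsMoufang (L : LoopStr M) : Prop :=
  ∀ x y z, L.mul z (L.mul x (L.mul z y)) = L.mul (L.mul (L.mul z x) z) y

/-- Powers in a loop. -/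
def pow (L : LoopStr M) : M → ℕ → M := opow L.mul L.one

/-- Order of an element of a loop. -/
noncomputable def order (L : LoopStr M) : M → ℕ := oorder L.mul L.one

/-- Inverse of an element of a loop. -/
noncomputable def inv (L : LoopStr M) : M → M := oinv L.mul L.one

/-- The multiplication of the loop is associative. -/
def IsAssociative (L : LoopStr M) : Prop :=
  ∀ x y z, L.mul (L.mul x y) z = L.mul x (L.mul y z)

/-- `M` is a cyclic group: the multiplication is associative and some element has
every element as a power. -/
def IsCyclicGroup (L : LoopStr M) : Prop :=
  L.IsAssociative ∧ ∃ g, ∀ x, ∃ k : ℕ, L.pow g k = x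

/-- `M` is a group isomorphic to a generalized quaternion group
`QuaternionGroup (2 ^ k)` (of order `2 ^ (k + 2)`) for some `k ≥ 1`. -/
def IsGeneralizedQuaternion (L : LoopStr M) : Prop :=
  ∃ k : ℕ, 1 ≤ k ∧ ∃ φ : M ≃ QuaternionGroup (2 ^ k),
    ∀ x y, φ (L.mul x y) = φ x * φ y

/-- `M` is a generalized octonion loop: it is nonassociative and every associative
commutative subloop is cyclic. -/
def IsGeneralizedOctonion (L : LoopStr M) : Prop :=
  ¬ L.IsAssociative ∧ ∀ S : Set M, IsSubloop L.mul L.one S →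
    IsAssocOn L.mul S → IsCommOn L.mul S → IsCyclicSubloop L.mul L.one S

/-- The undirected power graph of a loop: distinct `x` and `y` are adjacent iff one
is a power of the other. -/
def powerGraph (L : LoopStr M) : SimpleGraph M where
  Adj x y := x ≠ y ∧ ∃ k : ℕ, L.pow x k = y ∨ L.pow y k = x
  symm := by
    constructor
    rintro x y ⟨hne, k, hk⟩
    exact ⟨hne.symm, k, hk.symm⟩
  loopless := ⟨fun x h => h.1 rfl⟩

/-- The left translation by `a`, as a permutation. -/
noncomputable def leftTrans (L : LoopStr M) (a : M) : Equiv.Perm M :=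
  Equiv.ofBijective _ (L.mulLeft_bijective a)

/-- The right translation by `a`, as a permutation. -/
noncomputable def rightTrans (L : LoopStr M) (a : M) : Equiv.Perm M :=
  Equiv.ofBijective _ (L.mulRight_bijective a)

/-- The multiplication group of a loop: the group of permutations generated by all
left and right translations. -/
noncomputable def multGroup (L : LoopStr M) : Subgroup (Equiv.Perm M) :=
  Subgroup.closure (Set.range L.leftTrans ∪ Set.range L.rightTrans)

/-- An inner mapping: an element of the multiplication group fixing the identity. -/
def IsInnerMapping (L : LoopStr M) (φ : Equiv.Perm M) : Prop :=
  φ ∈ L.multGroup ∧ φ L.one = L.one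

end LoopStr

/-- The multiplication of the Chein double `M(G, 2)` of a group `G` with respect to a
central element `c ≠ 1`. -/
def cheinMul {G : Type*} [Group G] (c : G) (x y : G × ZMod 2) : G × ZMod 2 :=
  if x.2 = 0 then
    if y.2 = 0 then (x.1 * y.1, 0) else (y.1 * x.1, 1)
  else
    if y.2 = 0 then (x.1 * y.1⁻¹, 1) else (c * y.1⁻¹ * x.1, 0)

/-- The unique element of order `2` of the dicyclic group `QuaternionGroup m`
(for `m ≥ 1`), namely `a ^ m`. -/
def quatC (m : ℕ) : QuaternionGroup m := QuaternionGroup.a (m : ZMod (2 * m))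


namespace LoopStr

variable {M : Type*} (L : LoopStr M)

lemma pow_zero' (x : M) : L.pow x 0 = L.one := rfl

lemma pow_succ' (x : M) (k : ℕ) : L.pow x (k + 1) = L.mul x (L.pow x k) := rfl

lemma pow_one' (x : M) : L.pow x 1 = x := L.mul_one x

lemma one_pow' (k : ℕ) : L.pow L.one k = L.one := by
  induction k with
  | zero => rfl
  | succ k ih => rw [pow_succ', ih, L.one_mul]

lemma flex (hM : L.IsMoufang) (a b : M) :
    L.mul a (L.mul b a) = L.mul (L.mul a b) a := by
  have h := hM b L.one a
  simpa [L.mul_one] using h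

lemma pow_succ_right (hM : L.IsMoufang) (x : M) (k : ℕ) :
    L.pow x (k + 1) = L.mul (L.pow x k) x := by
  induction k with
  | zero => rw [pow_one', pow_zero', L.one_mul]
  | succ k ih =>
    calc L.pow x (k + 1 + 1) = L.mul x (L.mul (L.pow x k) x) := by rw [pow_succ', ih]
    _ = L.mul (L.mul x (L.pow x k)) x := flex L hM x (L.pow x k)
    _ = L.mul (L.pow x (k + 1)) x := rfl

lemma pow_add' (hM : L.IsMoufang) (x : M) (a b : ℕ) :
    L.mul (L.pow x a) (L.pow x b) = L.pow x (a + b) := by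
  induction a using Nat.strong_induction_on generalizing b with
  | _ a ih =>
    match a with
    | 0 => rw [pow_zero', L.one_mul, Nat.zero_add]
    | 1 => rw [pow_one']; rw [Nat.add_comm]; rfl
    | (a + 2) =>
      rcases b with _ | c
      · rw [pow_zero', L.mul_one]
      · have h := hM (L.pow x a) (L.pow x (c + 1)) x
        rw [show L.mul x (L.pow x (c + 1)) = L.pow x (c + 2) from rfl] at h
        rw [show L.mul x (L.pow x a) = L.pow x (a + 1) from rfl] at h
        rw [← pow_succ_right L hM x (a + 1)] at h
        rw [← h, ih a (by omega) (c + 2)]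
        show L.pow x (a + (c + 2) + 1) = L.pow x (a + 2 + (c + 1))
        rw [show a + (c + 2) + 1 = a + 2 + (c + 1) by omega]

lemma pow_mul' (hM : L.IsMoufang) (x : M) (a k : ℕ) :
    L.pow (L.pow x a) k = L.pow x (a * k) := by
  induction k with
  | zero => rw [Nat.mul_zero]; rfl
  | succ k ih =>
    rw [pow_succ', ih, show L.mul (L.pow x a) (L.pow x (a*k)) = L.pow x (a + a*k) from
      pow_add' L hM x a (a*k), Nat.mul_succ]
    rw [show a * k + a = a + a * k by omega]

lemma mul_left_cancel' (a : M) {u v : M} (h : L.mul a u = L.mul a v) : u = v :=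
  (L.mulLeft_bijective a).injective h

lemma pow_sub_eq_one (x : M) : ∀ i j, i ≤ j → L.pow x i = L.pow x j → L.pow x (j - i) = L.one := by
  intro i
  induction i with
  | zero => intro j _ h; rw [Nat.sub_zero]; exact h.symm
  | succ i ih =>
    intro j hij h
    obtain ⟨j', rfl⟩ : ∃ j', j = j' + 1 := ⟨j - 1, by omega⟩
    have h2 : L.pow x i = L.pow x j' := L.mul_left_cancel' x h
    have h3 := ih j' (by omega) h2
    simpa [Nat.succ_sub_succ] using h3

variable [Fintype M]

lemma exists_pow_eq_one (x : M) : ∃ k, 0 < k ∧ L.pow x k = L.one := by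
  obtain ⟨i, j, hne, h⟩ := Finite.exists_ne_map_eq_of_infinite (fun k : ℕ => L.pow x k)
  rcases Nat.lt_or_ge i j with hij | hij
  · exact ⟨j - i, by omega, L.pow_sub_eq_one x i j hij.le h⟩
  · have hji : j < i := by omega
    exact ⟨i - j, by omega, L.pow_sub_eq_one x j i hji.le h.symm⟩

lemma order_spec (x : M) : 0 < L.order x ∧ L.pow x (L.order x) = L.one := by
  have hne : {k : ℕ | 0 < k ∧ L.pow x k = L.one}.Nonempty := L.exists_pow_eq_one x
  exact Nat.sInf_mem hne

lemma order_pos (x : M) : 0 < L.order x := (L.order_spec x).1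

lemma pow_order (x : M) : L.pow x (L.order x) = L.one := (L.order_spec x).2

lemma order_min (x : M) {k : ℕ} (h0 : 0 < k) (hk : k < L.order x) : L.pow x k ≠ L.one := by
  intro h
  have : L.order x ≤ k := Nat.sInf_le ⟨h0, h⟩
  omega

lemma order_one' : L.order L.one = 1 := by
  have h1 : L.order L.one ≤ 1 := Nat.sInf_le ⟨Nat.one_pos, L.pow_one' L.one⟩
  have h2 := L.order_pos L.one
  omega

lemma pow_mod_gen (hM : L.IsMoufang) (x : M) {n : ℕ} (hn : L.pow x n = L.one) (k : ℕ) :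
    L.pow x (k % n) = L.pow x k := by
  rcases Nat.eq_zero_or_pos n with rfl | hn0
  · rw [Nat.mod_zero]
  · conv_rhs => rw [← Nat.div_add_mod k n]
    rw [← pow_add' L hM, ← pow_mul' L hM, hn, one_pow', L.one_mul]

lemma pow_mod (hM : L.IsMoufang) (x : M) (k : ℕ) :
    L.pow x (k % L.order x) = L.pow x k :=
  pow_mod_gen L hM x (L.pow_order x) k

lemma order_dvd (hM : L.IsMoufang) (x : M) {k : ℕ} (h : L.pow x k = L.one) :
    L.order x ∣ k := by
  by_contra hnd
  have h0 : 0 < k % L.order x := by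
    rcases Nat.eq_zero_or_pos (k % L.order x) with hz | hpos
    · exact absurd (Nat.dvd_of_mod_eq_zero hz) hnd
    · exact hpos
  have hlt : k % L.order x < L.order x := Nat.mod_lt _ (L.order_pos x)
  exact L.order_min x h0 hlt (by rw [L.pow_mod hM]; exact h)

lemma pow_injOn (x : M) : Set.InjOn (fun k => L.pow x k) (Set.Iio (L.order x)) := by
  have key : ∀ i j, i < j → j < L.order x → L.pow x i = L.pow x j → False := by
    intro i j hij hj h
    exact L.order_min x (k := j - i) (by omega) (by omega) (L.pow_sub_eq_one x i j hij.le h) 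
  intro i hi j hj h
  rcases lt_trichotomy i j with h' | h' | h'
  · exact (key i j h' hj h).elim
  · exact h'
  · exact (key j i h' hi h.symm).elim

lemma powers_eq_image (hM : L.IsMoufang) (x : M) :
    {y : M | ∃ k : ℕ, L.pow x k = y} = (fun k => L.pow x k) '' (Set.Iio (L.order x)) := by
  ext y
  constructor
  · rintro ⟨k, rfl⟩
    exact ⟨k % L.order x, Nat.mod_lt _ (L.order_pos x), L.pow_mod hM x k⟩
  · rintro ⟨k, _, rfl⟩
    exact ⟨k, rfl⟩

lemma powers_ncard (hM : L.IsMoufang) (x : M) :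
    {y : M | ∃ k : ℕ, L.pow x k = y}.ncard = L.order x := by
  rw [powers_eq_image L hM x, Set.ncard_image_of_injOn (L.pow_injOn x)]
  rw [Set.ncard_eq_toFinset_card', Set.toFinset_Iio, Nat.card_Iio]

lemma isSubloop_powers (hM : L.IsMoufang) (x : M) :
    IsSubloop L.mul L.one {y : M | ∃ k : ℕ, L.pow x k = y} := by
  refine ⟨⟨0, rfl⟩, ?_, ?_⟩
  · rintro _ ⟨a, rfl⟩ _ ⟨b, rfl⟩
    exact ⟨a + b, (L.pow_add' hM x a b).symm⟩
  · rintro _ ⟨a, rfl⟩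
    exact ⟨a * (L.order (L.pow x a) - 1), (L.pow_mul' hM x a _).symm⟩

lemma arith_aux (q o k r : ℕ) (ho : 1 ≤ o) (hk : q + r = k) :
    q * (o - 1) + k = q * o + r := by
  obtain ⟨o', rfl⟩ : ∃ o', o = o' + 1 := ⟨o - 1, by omega⟩
  rw [Nat.add_sub_cancel]
  have h : q * (o' + 1) = q * o' + q := by ring
  omega

lemma subloop_pow_mem {S : Set M} (hS : IsSubloop L.mul L.one S) {z : M} (hz : z ∈ S) (k : ℕ) :
    L.pow z k ∈ S := by
  induction k with
  | zero => exact hS.1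
  | succ k ih => exact hS.2.1 z hz _ ih

lemma order_pow_dvd (hM : L.IsMoufang) (x : M) {d : ℕ} (hd : d ∣ L.order x) (hd0 : 0 < d) :
    L.order (L.pow x d) = L.order x / d := by
  have hn : 0 < L.order x := L.order_pos x
  have h1 : L.pow (L.pow x d) (L.order x / d) = L.one := by
    rw [pow_mul' L hM, Nat.mul_div_cancel' hd, L.pow_order]
  have h2 : L.order (L.pow x d) ∣ L.order x / d := L.order_dvd hM _ h1
  have hm2 : L.pow x (d * L.order (L.pow x d)) = L.one := by
    rw [← pow_mul' L hM]; exact L.pow_order _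
  have h3 : L.order x ∣ d * L.order (L.pow x d) := L.order_dvd hM x hm2
  have hle1 : L.order (L.pow x d) ≤ L.order x / d :=
    Nat.le_of_dvd (Nat.div_pos (Nat.le_of_dvd hn hd) hd0) h2
  have hle2 : L.order x / d ≤ L.order (L.pow x d) := by
    have hdm : 0 < d * L.order (L.pow x d) := Nat.mul_pos hd0 (L.order_pos _)
    have h4 : L.order x ≤ d * L.order (L.pow x d) := Nat.le_of_dvd hdm h3
    obtain ⟨c, hc⟩ := hd
    rw [hc, Nat.mul_div_cancel_left c hd0]
    rw [hc] at h4
    exact Nat.le_of_mul_le_mul_left h4 hd0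
  omega

end LoopStr

end PowerGraphPaper

/-- **Lemma.** If a non-identity vertex `x` of the power graph of a finite Moufang loop
is adjacent to all other vertices and `p` divides the order of some element, then every
element of order `p` is a power of `x` and there is a unique subloop of order `p`,
contained in the powers of `x`. -/
theorem PowerGraphPaper.dominating_vertex_unique_subloop
    {M : Type*} [Fintype M] (L : LoopStr M) (hM : L.IsMoufang)
    (x : M) (hx1 : x ≠ L.one)
    (hadj : ∀ y : M, y ≠ x → L.powerGraph.Adj x y)
    (p : ℕ) (hp : p.Prime) (hdvd : ∃ y : M, p ∣ L.order y) :
    (∀ y : M, L.order y = p → ∃ k : ℕ, L.pow x k = y) ∧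
    (∃! S : Set M, IsSubloop L.mul L.one S ∧ S.ncard = p) ∧
    (∀ S : Set M, IsSubloop L.mul L.one S → S.ncard = p →
      S ⊆ {y : M | ∃ k : ℕ, L.pow x k = y}) := by
  classical
  have hp1 : 1 < p := hp.one_lt
  -- Claim 1 (generalized): any y ≠ 1 with y^p = 1 is a power of x
  have claim1 : ∀ y : M, y ≠ L.one → L.pow y p = L.one → ∃ k : ℕ, L.pow x k = y := by
    intro y hy hyp
    by_cases hyx : y = x
    · exact ⟨1, by rw [L.pow_one', hyx]⟩
    obtain ⟨-, k, hk⟩ := hadj y hyx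
    rcases hk with hk | hk
    · exact ⟨k, hk⟩
    · have hpk : ¬ p ∣ k := by
        rintro ⟨c, rfl⟩
        apply hx1
        rw [← hk, ← L.pow_mod_gen hM y hyp (p * c), Nat.mul_mod_right, L.pow_zero']
      have hc : Nat.Coprime k p := ((hp.coprime_iff_not_dvd).mpr hpk).symm
      obtain ⟨m, -, hm⟩ := Nat.exists_mul_mod_eq_one_of_coprime hc hp1
      refine ⟨m, ?_⟩
      rw [← hk, L.pow_mul' hM, ← L.pow_mod_gen hM y hyp (k * m), hm, L.pow_one']
  -- existence of an element z ≠ 1 with z^p = 1, and p ∣ order x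
  obtain ⟨y0, hy0⟩ := hdvd
  have hd0 : 0 < L.order y0 := L.order_pos y0
  have hzp : L.pow (L.pow y0 (L.order y0 / p)) p = L.one := by
    rw [L.pow_mul' hM, Nat.div_mul_cancel hy0, L.pow_order]
  have hz1 : L.pow y0 (L.order y0 / p) ≠ L.one :=
    L.order_min y0 (Nat.div_pos (Nat.le_of_dvd hd0 hy0) hp.pos) (Nat.div_lt_self hd0 hp1)
  obtain ⟨k0, hk0⟩ := claim1 _ hz1 hzp
  have hn0 : 0 < L.order x := L.order_pos x
  have hpn : p ∣ L.order x := by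
    have h1 : L.pow x (k0 * p) = L.one := by rw [← L.pow_mul' hM, hk0, hzp]
    have h2 : L.order x ∣ k0 * p := L.order_dvd hM x h1
    have h3 : ¬ L.order x ∣ k0 := by
      rintro ⟨c, rfl⟩
      apply hz1
      rw [← hk0, ← L.pow_mul' hM, L.pow_order, L.one_pow']
    by_contra hnp
    have hcop : (L.order x).Coprime p := ((hp.coprime_iff_not_dvd).mpr hnp).symm
    exact h3 (hcop.dvd_of_dvd_mul_right h2)
  -- any subloop of order p is contained in the powers of x
  have hsub : ∀ S : Set M, IsSubloop L.mul L.one S → S.ncard = p →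
      S ⊆ {y : M | ∃ k : ℕ, L.pow x k = y} := by
    intro S hS hcard
    by_cases hxS : x ∈ S
    · have hXS : {y : M | ∃ k : ℕ, L.pow x k = y} ⊆ S := by
        rintro _ ⟨k, rfl⟩
        exact LoopStr.subloop_pow_mem L hS hxS k
      have hXeq : {y : M | ∃ k : ℕ, L.pow x k = y} = S := by
        apply Set.eq_of_subset_of_ncard_le hXS
        rw [L.powers_ncard hM, hcard]
        exact Nat.le_of_dvd hn0 hpn
      rw [← hXeq]
    · intro s hs
      have hsx : s ≠ x := fun h => hxS (h ▸ hs)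
      obtain ⟨-, k, hk⟩ := hadj s hsx
      rcases hk with hk | hk
      · exact ⟨k, hk⟩
      · exact absurd (hk ▸ LoopStr.subloop_pow_mem L hS hs k) hxS
  -- any subloop of order p equals the powers of x ^ (order x / p)
  have hchar : ∀ S : Set M, IsSubloop L.mul L.one S → S.ncard = p →
      S = {y : M | ∃ k : ℕ, L.pow (L.pow x (L.order x / p)) k = y} := by
    intro S hS hcard
    have hSX := hsub S hS hcard
    set A := {k : ℕ | 0 < k ∧ L.pow x k ∈ S} with hAdef
    have hAne : A.Nonempty := ⟨L.order x, hn0, by rw [L.pow_order]; exact hS.1⟩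
    set e := sInf A with hedef
    have heA : e ∈ A := Nat.sInf_mem hAne
    have hdvdk : ∀ k : ℕ, L.pow x k ∈ S → e ∣ k := by
      intro k hk
      rcases Nat.eq_zero_or_pos (k % e) with h0 | hpos
      · exact Nat.dvd_of_mod_eq_zero h0
      exfalso
      have hq : L.pow x (e * (k / e)) ∈ S := by
        rw [← L.pow_mul' hM]
        exact LoopStr.subloop_pow_mem L hS heA.2 _
      have hu : oinv L.mul L.one (L.pow x (e * (k / e))) ∈ S := hS.2.2 _ hq
      have huval : oinv L.mul L.one (L.pow x (e * (k / e))) =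
          L.pow x ((e * (k / e)) * (L.order (L.pow x (e * (k / e))) - 1)) := by
        show L.pow (L.pow x (e * (k / e))) (L.order (L.pow x (e * (k / e))) - 1) = _
        rw [L.pow_mul' hM]
      rw [huval] at hu
      have hmul := hS.2.1 _ hu _ hk
      rw [L.pow_add' hM] at hmul
      have hexp : (e * (k / e)) * (L.order (L.pow x (e * (k / e))) - 1) + k
          = (e * (k / e)) * L.order (L.pow x (e * (k / e))) + k % e := by
        exact PowerGraphPaper.LoopStr.arith_aux _ _ _ _ (L.order_pos _) (Nat.div_add_mod k e)
      rw [hexp] at hmul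
      have hone : L.pow x ((e * (k / e)) * L.order (L.pow x (e * (k / e)))) = L.one := by
        rw [← L.pow_mul' hM]
        exact L.pow_order _
      rw [← L.pow_add' hM, hone, L.one_mul] at hmul
      have hkeA : k % e ∈ A := ⟨hpos, hmul⟩
      have h5 : e ≤ k % e := Nat.sInf_le hkeA
      have h6 : k % e < e := Nat.mod_lt _ heA.1
      omega
    have hen : e ∣ L.order x := hdvdk _ (by rw [L.pow_order]; exact hS.1)
    have hSeq : S = {y : M | ∃ j : ℕ, L.pow (L.pow x e) j = y} := by
      ext s
      constructor
      · intro hs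
        obtain ⟨k, rfl⟩ := hSX hs
        obtain ⟨j, rfl⟩ := hdvdk k hs
        exact ⟨j, L.pow_mul' hM x e j⟩
      · rintro ⟨j, rfl⟩
        exact LoopStr.subloop_pow_mem L hS heA.2 j
    have h1 : S.ncard = L.order (L.pow x e) := by rw [hSeq]; exact L.powers_ncard hM _
    have h2 : L.order (L.pow x e) = L.order x / e := L.order_pow_dvd hM x hen heA.1
    have h3 : e = L.order x / p := by
      have hpe : p = L.order x / e := by rw [← hcard, h1, h2]
      rw [hpe]
      exact (Nat.div_div_self hen hn0.ne').symm
    rw [hSeq, h3]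
  -- the powers of x ^ (order x / p) form a subloop of order p
  have hdp : (L.order x / p) ∣ L.order x := Nat.div_dvd_of_dvd hpn
  have hdp0 : 0 < L.order x / p := Nat.div_pos (Nat.le_of_dvd hn0 hpn) hp.pos
  have hPcard : {y : M | ∃ k : ℕ, L.pow (L.pow x (L.order x / p)) k = y}.ncard = p := by
    rw [L.powers_ncard hM, L.order_pow_dvd hM x hdp hdp0, Nat.div_div_self hpn hn0.ne']
  refine ⟨?_, ⟨{y : M | ∃ k : ℕ, L.pow (L.pow x (L.order x / p)) k = y},
      ⟨L.isSubloop_powers hM _, hPcard⟩, fun S hS => hchar S hS.1 hS.2⟩, hsub⟩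
  intro y hy
  have hy1 : y ≠ L.one := by
    intro h
    rw [h, L.order_one'] at hy
    omega
  exact claim1 y hy1 (by rw [← hy]; exact L.pow_order y)
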